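/- arXiv:1209.3571 — 5 statements merged into one kernel-verified Lean document; each statement's English description precedes it below -/
import Mathlib

section
/- Let α, β, T, L, M, Z be real numbers with 0 < α ≤ β, T ≤ 0, Z ≥ 0, and M ≥ −α·T. Define c₁ := 2(α+β)(L+M) + (α+β)²·T and c₂ := αβ·T + α·L + β·M + Z. Then c₂ ≥ (α / (2(α+β))) · c₁. -/
/-- Numerical content of the Bogomolov-type bound `c₂(G) ≥ (α/(2(α+β)))·c₁(G)²`
from the Brosius extension for a weakly positive rank two bundle. -/
theorem brosius_c2_bound (α β T L M Z : ℝ)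
    (hα : 0 < α) (hαβ : α ≤ β) (hT : T ≤ 0) (hZ : 0 ≤ Z) (hM : M ≥ -α * T) :
    α * β * T + α * L + β * M + Z ≥
      (α / (2 * (α + β))) * (2 * (α + β) * (L + M) + (α + β) ^ 2 * T) := by
  have hs : 0 < α + β := by linarith
  rw [ge_iff_le, div_mul_eq_mul_div, div_le_iff₀ (by linarith : (0:ℝ) < 2 * (α + β))]
  nlinarith [mul_nonneg (sub_nonneg.2 hαβ) (by linarith : 0 ≤ M + α * T),
    mul_nonneg (mul_nonneg hα.le (sub_nonneg.2 hαβ)) (neg_nonneg.2 hT)]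
end

section
/- Let g and c be real numbers with g ≥ 5 and c > 0, and let d be a real number with (2/9)·c ≤ d < ((g+1)/(2(g+2)))·c. Then ((2g/(g+2))·c − 3d) / (((g+1)/(2(g+2)))·c − d) ≥ 24(g−1)/(5g+1). -/
/-- Numerical content of the slope bound `s(f) ≥ 24(g-1)/(5g+1)` for trigonal
fibrations. -/
theorem trigonal_slope_bound_general (g c d : ℝ) (hg : g ≥ 5) (hc : c > 0)
    (hd1 : (2 / 9) * c ≤ d) (hd2 : d < ((g + 1) / (2 * (g + 2))) * c) :
    ((2 * g / (g + 2)) * c - 3 * d) / (((g + 1) / (2 * (g + 2))) * c - d) ≥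
      24 * (g - 1) / (5 * g + 1) := by
  have hg2 : g + 2 > 0 := by linarith
  have h5 : 5 * g + 1 > 0 := by linarith
  have hden : ((g + 1) / (2 * (g + 2))) * c - d > 0 := by linarith
  rw [ge_iff_le, div_le_div_iff₀ h5 hden]
  have h1 : (2 * g / (g + 2)) * c * (g + 2) = 2 * g * c := by field_simp
  have h2 : ((g + 1) / (2 * (g + 2))) * c * (2 * (g + 2)) = (g + 1) * c := by field_simp
  nlinarith [mul_nonneg (sub_nonneg.2 hd1) (by linarith : (0:ℝ) ≤ g - 3), sq_nonneg (g - 3)]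
end

section
/- Let g and c be real numbers with g ≥ 4 and c > 0, and let d be a real number with (1/4)·c ≤ d < ((g+1)/(2(g+2)))·c. Then ((2g/(g+2))·c − 3d) / (((g+1)/(2(g+2)))·c − d) ≥ 5 − 6/g. -/
/-- Numerical content of the slope bound `s(f) ≥ 5 - 6/g` for general trigonal
fibrations of even genus. -/
theorem trigonal_slope_bound_even (g c d : ℝ) (hg : g ≥ 4) (hc : c > 0)
    (hd1 : (1 / 4) * c ≤ d) (hd2 : d < ((g + 1) / (2 * (g + 2))) * c) :
    ((2 * g / (g + 2)) * c - 3 * d) / (((g + 1) / (2 * (g + 2))) * c - d) ≥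
      5 - 6 / g := by
  have hg0 : g > 0 := by linarith
  have hg2 : g + 2 > 0 := by linarith
  have hden : ((g + 1) / (2 * (g + 2))) * c - d > 0 := by linarith
  rw [ge_iff_le, le_div_iff₀ hden]
  have key : (5 - 6 / g) * (((g + 1) / (2 * (g + 2))) * c - d)
      = (2 * g / (g + 2)) * c - 3 * d - ((g - 3) / g) * (2 * d - c / 2) := by
    field_simp
    ring
  rw [key]
  have h1 : ((g - 3) / g) * (2 * d - c / 2) ≥ 0 := by
    apply mul_nonneg
    · apply div_nonneg <;> linarith
    · linarith
  linarith
end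

section
/- Let g, c, e, f be real numbers with g > 1, c > 0, f ≥ (2/(g+3))·c, f < ((g+1)/(g+3))·c, e ≥ (1/4)(c + f), and e < ((g+2)/(2(g+3)))·c. Then ((2(g+1)/(g+3))·c − 4e + f) / (((g+2)/(2(g+3)))·c − e) ≥ 4 + (f − (2/(g+3))·c) / (((g+1)/(4(g+3)))·c − f/4). -/
/-- Numerical content of the slope reduction for fourgonal fibrations:
substituting the Index-Theorem bound for `c₂(E)` gives the formula of
Corollary `formulaslope`. -/
theorem fourgonal_slope_reduction (g c e f : ℝ) (hg : g > 1) (hc : c > 0)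
    (hf1 : f ≥ (2 / (g + 3)) * c) (hf2 : f < ((g + 1) / (g + 3)) * c)
    (he1 : e ≥ (1 / 4) * (c + f)) (he2 : e < ((g + 2) / (2 * (g + 3))) * c) :
    ((2 * (g + 1) / (g + 3)) * c - 4 * e + f) /
        (((g + 2) / (2 * (g + 3))) * c - e) ≥
      4 + (f - (2 / (g + 3)) * c) / (((g + 1) / (4 * (g + 3))) * c - f / 4) := by
  have hg3 : g + 3 > 0 := by linarith
  set m : ℝ := f - (2 / (g + 3)) * c with hmdef
  set D : ℝ := ((g + 2) / (2 * (g + 3))) * c - e with hDdef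
  set D' : ℝ := ((g + 1) / (4 * (g + 3))) * c - f / 4 with hD'def
  have hm : 0 ≤ m := by simp only [hmdef]; linarith
  have hD : 0 < D := by simp only [hDdef]; linarith
  have hkey : (g + 2) / (2 * (g + 3)) * c - (1 / 4) * c = (g + 1) / (4 * (g + 3)) * c := by
    field_simp
    ring
  have hDD' : D ≤ D' := by
    simp only [hDdef, hD'def]
    linarith
  have hD' : 0 < D' := lt_of_lt_of_le hD hDD'
  have hN : (2 * (g + 1) / (g + 3)) * c - 4 * e + f = 4 * D + m := by
    simp only [hDdef, hmdef]
    field_simp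
    ring
  have hfrac : m / D' ≤ m / D := by gcongr
  calc ((2 * (g + 1) / (g + 3)) * c - 4 * e + f) / D
      = (4 * D + m) / D := by rw [hN]
    _ = 4 + m / D := by field_simp
    _ ≥ 4 + m / D' := by linarith
end

section
/- Let g, c, f be real numbers with g > 1, c > 0, and (1/6)·c ≤ f < ((g+1)/(g+3))·c. Then 4 + (f − (2/(g+3))·c) / (((g+1)/(4(g+3)))·c − f/4) ≥ 24(g−1)/(5g+3). -/
/-- Numerical content of the bound `s(f) ≥ 24(g-1)/(5g+3)` for fourgonal
fibrations whose gonal covering does not factorize. -/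
theorem fourgonal_slope_bound_nonfactorizing (g c f : ℝ) (hg : g > 1)
    (hc : c > 0) (hf1 : (1 / 6) * c ≤ f) (hf2 : f < ((g + 1) / (g + 3)) * c) :
    4 + (f - (2 / (g + 3)) * c) / (((g + 1) / (4 * (g + 3))) * c - f / 4) ≥
      24 * (g - 1) / (5 * g + 3) := by
  have h3 : (0:ℝ) < g + 3 := by linarith
  have h53 : (0:ℝ) < 5 * g + 3 := by linarith
  have hf2' : f * (g + 3) < (g + 1) * c := by
    have h := mul_lt_mul_of_pos_right hf2 h3
    have heq : ((g + 1) / (g + 3)) * c * (g + 3) = (g + 1) * c := by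
      field_simp
    linarith
  have hD : 0 < ((g + 1) / (4 * (g + 3))) * c - f / 4 := by
    have hEq : ((g + 1) / (4 * (g + 3))) * c = (g + 1) * c / (4 * (g + 3)) := by ring
    rw [hEq, sub_pos, div_lt_div_iff₀ (by norm_num) (by linarith)]
    nlinarith
  rw [ge_iff_le]
  set D := ((g + 1) / (4 * (g + 3))) * c - f / 4 with hDdef
  have hND : 4 + (f - (2 / (g + 3)) * c) / D
      = (4 * D + (f - (2 / (g + 3)) * c)) / D := by
    rw [add_div, mul_div_assoc, div_self hD.ne', mul_one]
  rw [hND, div_le_div_iff₀ h53 hD]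
  have h6f : 0 ≤ 6 * f - c := by linarith
  have hg1 : (0:ℝ) ≤ g - 1 := by linarith
  have hkey : 0 ≤ (g - 1) * (6 * f - c) := mul_nonneg hg1 h6f
  have h3ne : g + 3 ≠ 0 := ne_of_gt h3
  rw [hDdef]
  field_simp
  nlinarith [mul_nonneg (mul_nonneg hkey h3.le) h53.le, mul_nonneg hkey h3.le,
    mul_nonneg hkey h53.le, mul_nonneg (mul_nonneg hkey h3.le) h3.le]
end
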